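/- Let n ≥ 2 be an integer with n ≡ 2 (mod 4) or n ≡ 3 (mod 4), and let u be any integer. Then the rational number Δ_n^{(u)} = ∏_{j=2}^n j^j · ((2u + 1 + 2j)/2)^{j-1} is not the square of a rational number. -/

import Mathlib

open Finset

/-- The discriminant `Δ_n^{(u)} = ∏_{j=2}^n j^j ((2u+1+2j)/2)^(j-1)` of the polynomial
`𝓛_n^{(u)}(x)`. -/
def laguerreDisc (n : ℕ) (u : ℤ) : ℚ :=
  ∏ j ∈ Finset.Icc 2 n, (j : ℚ) ^ j * ((2 * (u : ℚ) + 1 + 2 * (j : ℚ)) / 2) ^ (j - 1)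

private lemma padicValRat_prod {p : ℕ} [hp : Fact p.Prime] {α : Type*} (s : Finset α)
    (f : α → ℚ) (hf : ∀ a ∈ s, f a ≠ 0) :
    padicValRat p (∏ a ∈ s, f a) = ∑ a ∈ s, padicValRat p (f a) := by
  classical
  induction s using Finset.cons_induction with
  | empty => simp
  | cons a s ha ih =>
    rw [Finset.prod_cons, Finset.sum_cons,
      padicValRat.mul (hf a (Finset.mem_cons_self a s))
        (Finset.prod_ne_zero_iff.2 fun b hb => hf b (Finset.mem_cons_of_mem hb)),
      ih fun b hb => hf b (Finset.mem_cons_of_mem hb)]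

private lemma gauss_sum (n : ℕ) (hn : 2 ≤ n) :
    2 * ∑ j ∈ Finset.Icc 2 n, ((j : ℤ) - 1) = n * (n - 1) := by
  induction n, hn using Nat.le_induction with
  | base => decide
  | succ n hn ih =>
    rw [Finset.sum_Icc_succ_top (by omega : 2 ≤ n + 1)]
    push_cast at ih ⊢
    linarith

/-- For `n ≥ 2` with `n ≡ 2` or `3 (mod 4)` and any integer `u`, the discriminant
`Δ_n^{(u)}` is not the square of a rational. -/
theorem laguerreDisc_not_square_of_mod_four (n : ℕ) (hn : 2 ≤ n)
    (h : n % 4 = 2 ∨ n % 4 = 3) (u : ℤ) :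
    ¬ ∃ q : ℚ, laguerreDisc n u = q ^ 2 := by
  rintro ⟨q, hq⟩
  -- each factor is nonzero
  have hodd : ∀ j : ℕ, ¬ (2 : ℤ) ∣ (2 * u + 1 + 2 * j) := by
    intro j h2
    omega
  have hcne : ∀ j : ℕ, ((2 * u + 1 + 2 * (j : ℤ)) : ℚ) ≠ 0 := by
    intro j
    exact_mod_cast fun h0 => hodd j (by exact_mod_cast h0 ▸ dvd_zero 2)
  have hfactor : ∀ j ∈ Finset.Icc 2 n,
      (j : ℚ) ^ j * ((2 * (u : ℚ) + 1 + 2 * (j : ℚ)) / 2) ^ (j - 1) ≠ 0 := by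
    intro j hj
    have hj2 : 2 ≤ j := (Finset.mem_Icc.1 hj).1
    apply mul_ne_zero
    · exact pow_ne_zero _ (by positivity)
    · apply pow_ne_zero
      apply div_ne_zero _ two_ne_zero
      have := hcne j
      push_cast at this ⊢
      exact this
  have hΔ : laguerreDisc n u ≠ 0 := by
    exact Finset.prod_ne_zero_iff.2 hfactor
  have hq0 : q ≠ 0 := fun h0 => hΔ (by rw [hq, h0]; ring)
  -- valuation of each factor
  have hval : ∀ j ∈ Finset.Icc 2 n,
      padicValRat 2 ((j : ℚ) ^ j * ((2 * (u : ℚ) + 1 + 2 * (j : ℚ)) / 2) ^ (j - 1)) =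
        (j : ℤ) * padicValNat 2 j - ((j : ℤ) - 1) := by
    intro j hj
    have hj2 : 2 ≤ j := (Finset.mem_Icc.1 hj).1
    have hjQ : (j : ℚ) ≠ 0 := by positivity
    have hcQ : (2 * (u : ℚ) + 1 + 2 * (j : ℚ)) ≠ 0 := by
      have := hcne j; push_cast at this ⊢; exact this
    have hdQ : (2 * (u : ℚ) + 1 + 2 * (j : ℚ)) / 2 ≠ 0 := div_ne_zero hcQ two_ne_zero
    rw [padicValRat.mul (pow_ne_zero _ hjQ) (pow_ne_zero _ hdQ),
      padicValRat.pow (j : ℚ), padicValRat.pow ((2 * (u : ℚ) + 1 + 2 * (j : ℚ)) / 2),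
      padicValRat.div hcQ two_ne_zero]
    have h1 : padicValRat 2 (j : ℚ) = padicValNat 2 j := padicValRat.of_nat
    have h2 : padicValRat 2 (2 : ℚ) = 1 := by
      exact_mod_cast padicValRat.self (p := 2) one_lt_two
    have h3 : padicValRat 2 (2 * (u : ℚ) + 1 + 2 * (j : ℚ)) = 0 := by
      have : (2 * (u : ℚ) + 1 + 2 * (j : ℚ)) = (Int.cast (2 * u + 1 + 2 * (j : ℤ)) : ℚ) := by
        push_cast; ring
      rw [this, padicValRat.of_int, padicValInt.eq_zero_of_not_dvd (hodd j)]
      rfl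
    rw [h1, h2, h3]
    have : ((j - 1 : ℕ) : ℤ) = (j : ℤ) - 1 := by omega
    rw [this]
    ring
  -- total valuation
  have htot : padicValRat 2 (laguerreDisc n u) =
      (∑ j ∈ Finset.Icc 2 n, (j : ℤ) * padicValNat 2 j) -
        ∑ j ∈ Finset.Icc 2 n, ((j : ℤ) - 1) := by
    rw [laguerreDisc, padicValRat_prod _ _ hfactor, ← Finset.sum_sub_distrib]
    exact Finset.sum_congr rfl hval
  -- first sum is even
  have hA : Even (∑ j ∈ Finset.Icc 2 n, (j : ℤ) * padicValNat 2 j) := by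
    apply Finset.even_sum
    intro j hj
    rcases Nat.even_or_odd j with hje | hjo
    · exact (Int.even_coe_nat j |>.2 hje).mul_right _
    · have : padicValNat 2 j = 0 :=
        padicValNat.eq_zero_of_not_dvd (by rw [Nat.odd_iff] at hjo; omega)
      simp [this]
  -- second sum is odd
  have hB : Odd (∑ j ∈ Finset.Icc 2 n, ((j : ℤ) - 1)) := by
    have hg := gauss_sum n hn
    generalize (∑ j ∈ Finset.Icc 2 n, ((j : ℤ) - 1)) = S at hg ⊢
    rcases h with h2 | h3
    · obtain ⟨k, hk⟩ : ∃ k, n = 4 * k + 2 := ⟨n / 4, by omega⟩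
      refine ⟨4 * (k : ℤ) ^ 2 + 3 * k, ?_⟩
      subst hk; push_cast at hg; ring_nf at hg ⊢; linarith
    · obtain ⟨k, hk⟩ : ∃ k, n = 4 * k + 3 := ⟨n / 4, by omega⟩
      refine ⟨4 * (k : ℤ) ^ 2 + 5 * k + 1, ?_⟩
      subst hk; push_cast at hg; ring_nf at hg ⊢; linarith
  have hoddΔ : Odd (padicValRat 2 (laguerreDisc n u)) := by
    rw [htot]
    exact hA.sub_odd hB
  have heven : Even (padicValRat 2 (laguerreDisc n u)) := by
    rw [hq, padicValRat.pow q]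
    exact ⟨padicValRat 2 q, by ring⟩
  exact (Int.not_even_iff_odd.2 hoddΔ) heven
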